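/- The normalization constant of the Turaev–Viro state sum is independent of the color. Let r ≥ 2 be an integer. For every color m_a (an integer with 0 ≤ m_a ≤ r−2): Σ Δ_{m_b} · Δ_{m_c} = Δ_{m_a} · r / (2·sin²(π/r)), where the sum runs over all pairs of colors (m_b, m_c) such that the triple (m_a, m_b, m_c) is admissible. In particular, the quantity Δ := Δ_{m_a}^{-1} · Σ_{(m_b,m_c) admissible} Δ_{m_b} Δ_{m_c} is independent of the color m_a. -/

import Mathlib

open Real

/-- The quantity `Δ_m = (−1)^m [m+1]_q = (−1)^m sin((m+1)π/r)/sin(π/r)` attached to a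
color `m` at level `r`. -/
noncomputable def quantumDelta (r m : ℕ) : ℝ :=
  (-1 : ℝ) ^ m * Real.sin ((m + 1) * π / r) / Real.sin (π / r)

/-- A triple of colors `(a, b, c)` at level `r` is admissible if
`|a − b| ≤ c ≤ min(a + b, 2(r−2) − a − b)` and `a + b + c` is even. -/
def QAdmissible (r a b c : ℕ) : Prop :=
  a ≤ b + c ∧ b ≤ a + c ∧ c ≤ a + b ∧ a + b + c ≤ 2 * (r - 2) ∧ Even (a + b + c)

instance (r a b c : ℕ) : Decidable (QAdmissible r a b c) := by
  unfold QAdmissible; infer_instance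

lemma sin_pir_pos (r : ℕ) (hr : 2 ≤ r) : 0 < Real.sin (π / r) := by
  have hrpos : (0 : ℝ) < r := by positivity
  apply Real.sin_pos_of_pos_of_lt_pi
  · positivity
  · rw [div_lt_iff₀ hrpos]
    nlinarith [mul_lt_mul_of_pos_left (show (1:ℝ) < r by exact_mod_cast hr) Real.pi_pos]

lemma sum_sin_sq (r : ℕ) (hr : 2 ≤ r) :
    ∑ b ∈ Finset.range (r - 1), Real.sin (((b : ℝ) + 1) * π / r) ^ 2 = r / 2 := by
  have hrpos : (0 : ℝ) < r := by positivity
  have hs : Real.sin (π / r) ≠ 0 := ne_of_gt (sin_pir_pos r hr)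
  set f : ℕ → ℝ := fun b => Real.sin ((2 * (b : ℝ) + 1) * π / r) with hf
  have hcos : ∑ b ∈ Finset.range (r - 1), Real.cos (2 * (((b : ℝ) + 1) * π / r)) = -1 := by
    have hterm : ∀ b : ℕ, f (b + 1) - f b
        = 2 * Real.sin (π / r) * Real.cos (2 * (((b : ℝ) + 1) * π / r)) := by
      intro b
      simp only [hf]
      push_cast
      rw [Real.sin_sub_sin,
        show ((2 * ((b:ℝ) + 1) + 1) * π / r - (2 * (b:ℝ) + 1) * π / r) / 2 = π / r by ring,
        show ((2 * ((b:ℝ) + 1) + 1) * π / r + (2 * (b:ℝ) + 1) * π / r) / 2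
          = 2 * (((b:ℝ) + 1) * π / r) by ring]
    have htel : ∑ b ∈ Finset.range (r - 1), (f (b + 1) - f b) = f (r - 1) - f 0 :=
      Finset.sum_range_sub f (r - 1)
    rw [Finset.sum_congr rfl (fun b _ => hterm b), ← Finset.mul_sum] at htel
    have hlast : f (r - 1) = - Real.sin (π / r) := by
      simp only [hf]
      rw [Nat.cast_sub (by omega : 1 ≤ r), Nat.cast_one,
        show (2 * ((r:ℝ) - 1) + 1) * π / r = 2 * π - π / r by field_simp; ring,
        Real.sin_two_pi_sub]
    have h0 : f 0 = Real.sin (π / r) := by simp [hf]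
    rw [hlast, h0] at htel
    have h2 : 2 * Real.sin (π / r) * (∑ b ∈ Finset.range (r - 1),
        Real.cos (2 * (((b : ℝ) + 1) * π / r))) = 2 * Real.sin (π / r) * (-1) := by
      rw [htel]; ring
    exact mul_left_cancel₀ (by simp [hs]) h2
  calc ∑ b ∈ Finset.range (r - 1), Real.sin (((b : ℝ) + 1) * π / r) ^ 2
      = ∑ b ∈ Finset.range (r - 1), (1 / 2 - Real.cos (2 * (((b : ℝ) + 1) * π / r)) / 2) := by
        simp [Real.sin_sq_eq_half_sub]
    _ = ((r - 1 : ℕ) : ℝ) * (1 / 2) - (-1) / 2 := by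
        rw [Finset.sum_sub_distrib, Finset.sum_const, Finset.card_range, ← Finset.sum_div, hcos,
          nsmul_eq_mul]
    _ = r / 2 := by
        rw [Nat.cast_sub (by omega : 1 ≤ r)]
        push_cast
        ring

lemma tele_sin (θ : ℝ) (A : ℕ) (N : ℕ) :
    2 * Real.sin θ * ∑ k ∈ Finset.range N, Real.sin (((A : ℝ) + 2 * k + 1) * θ)
      = Real.cos ((A : ℝ) * θ) - Real.cos (((A : ℝ) + 2 * N) * θ) := by
  induction N with
  | zero => simp
  | succ n ih =>
    rw [Finset.sum_range_succ, mul_add, ih]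
    have h : Real.cos (((A : ℝ) + 2 * n) * θ) - Real.cos (((A : ℝ) + 2 * (n + 1)) * θ)
        = 2 * Real.sin θ * Real.sin (((A : ℝ) + 2 * n + 1) * θ) := by
      rw [Real.cos_sub_cos,
        show (((A : ℝ) + 2 * n) * θ + ((A : ℝ) + 2 * (n + 1)) * θ) / 2
          = ((A : ℝ) + 2 * n + 1) * θ by ring,
        show (((A : ℝ) + 2 * n) * θ - ((A : ℝ) + 2 * (n + 1)) * θ) / 2 = -θ by ring,
        Real.sin_neg]
      ring
    push_cast
    push_cast at h
    linarith [h]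

lemma key_trig (ρ u v : ℝ) :
    Real.cos ((u - v) * ρ) - Real.cos ((u + v + 2) * ρ)
      = 2 * Real.sin ((u + 1) * ρ) * Real.sin ((v + 1) * ρ) := by
  rw [Real.cos_sub_cos,
    show ((u - v) * ρ + (u + v + 2) * ρ) / 2 = (u + 1) * ρ by ring,
    show ((u - v) * ρ - (u + v + 2) * ρ) / 2 = -((v + 1) * ρ) by ring,
    Real.sin_neg]
  ring

lemma qInnerSum (r a b : ℕ) (hr : 2 ≤ r) (ha : a ≤ r - 2) (hb : b ≤ r - 2) :
    2 * Real.sin (π / r) *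
      ∑ c ∈ (Finset.range (r - 1)).filter (fun c => QAdmissible r a b c),
        (-1 : ℝ) ^ c * Real.sin (((c : ℝ) + 1) * (π / r))
    = (-1 : ℝ) ^ (a + b) *
        (2 * Real.sin (((a : ℝ) + 1) * (π / r)) * Real.sin (((b : ℝ) + 1) * (π / r))) := by
  set A := max a b - min a b with hA
  set B := min (a + b) (2 * (r - 2) - (a + b)) with hB
  set N := (B - A) / 2 + 1 with hN
  have hset : (Finset.range (r - 1)).filter (fun c => QAdmissible r a b c)
      = (Finset.range N).image (fun k => A + 2 * k) := by
    ext c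
    simp only [Finset.mem_filter, Finset.mem_range, Finset.mem_image, QAdmissible, Nat.even_iff]
    constructor
    · rintro ⟨hc, h1, h2, h3, h4, h5⟩
      exact ⟨(c - A) / 2, by omega, by omega⟩
    · rintro ⟨k, hk, rfl⟩
      omega
  rw [hset, Finset.sum_image (by intro x _ y _ h; simp only at h; omega)]
  have hpow : ∀ k : ℕ, ((-1 : ℝ)) ^ (A + 2 * k) = (-1 : ℝ) ^ A := by
    intro k
    rw [pow_add, pow_mul]
    norm_num
  have hcast : ∀ k : ℕ, ((A + 2 * k : ℕ) : ℝ) + 1 = (A : ℝ) + 2 * k + 1 := by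
    intro k; push_cast; ring
  simp only [hpow, hcast]
  rw [← Finset.mul_sum, show ∀ x y z : ℝ, x * (y * z) = y * (x * z) from fun x y z => by ring,
    tele_sin (π / r) A N]
  have hA2N : A + 2 * N = B + 2 := by omega
  have hc1 : (A : ℝ) + 2 * (N : ℝ) = (B : ℝ) + 2 := by exact_mod_cast congrArg (Nat.cast : ℕ → ℝ) hA2N
  rw [hc1]
  have hcosB : Real.cos (((B : ℝ) + 2) * (π / r)) = Real.cos (((a : ℝ) + b + 2) * (π / r)) := by
    rcases le_total (a + b) (2 * (r - 2) - (a + b)) with h | h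
    · have : (B : ℝ) = (a : ℝ) + b := by
        have : B = a + b := by omega
        rw [this]; push_cast; ring
      rw [this]
    · have hBv : ((B : ℝ) + 2) = 2 * (r : ℝ) - 2 - a - b := by
        have h1 : B + 2 + a + b = 2 * r - 2 := by omega
        have := congrArg (Nat.cast : ℕ → ℝ) h1
        push_cast [Nat.cast_sub (by omega : 2 ≤ 2 * r)] at this
        linarith
      rw [hBv,
        show (2 * (r : ℝ) - 2 - a - b) * (π / r) = -(((a : ℝ) + b + 2) * (π / r) - 2 * π) by
          field_simp; ring,
        Real.cos_neg, Real.cos_sub_two_pi]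
  rw [hcosB]
  have hApar : (-1 : ℝ) ^ A = (-1 : ℝ) ^ (a + b) := by
    rcases Nat.even_or_odd (a + b) with h | h
    · have hA' : Even A := by rw [Nat.even_iff] at *; omega
      rw [hA'.neg_one_pow, h.neg_one_pow]
    · have hA' : Odd A := by rw [Nat.odd_iff] at h ⊢; omega
      rw [hA'.neg_one_pow, h.neg_one_pow]
  rw [hApar]
  rcases le_total b a with h | h
  · have : (A : ℝ) = (a : ℝ) - b := by
      have : A = a - b := by omega
      rw [this, Nat.cast_sub h]
    rw [this, key_trig]
  · have : (A : ℝ) = (b : ℝ) - a := by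
      have : A = b - a := by omega
      rw [this, Nat.cast_sub h]
    rw [this, show ((b:ℝ) - a) * (π/r) = ((b:ℝ) - a) * (π/r) from rfl,
      show ((a:ℝ) + b + 2) * (π/r) = ((b:ℝ) + a + 2) * (π/r) by ring, key_trig]
    ring

/-- **The normalization constant of the Turaev–Viro state sum is independent of the
color:** for every color `m_a`,
`Σ_{(m_b, m_c) admissible with m_a} Δ_{m_b} Δ_{m_c} = Δ_{m_a} · r / (2 sin²(π/r))`. -/
theorem quantum_normalization_constant (r : ℕ) (hr : 2 ≤ r) (ma : ℕ) (hma : ma ≤ r - 2) :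
    ∑ p ∈ (Finset.range (r - 1) ×ˢ Finset.range (r - 1)).filter
        (fun p => QAdmissible r ma p.1 p.2),
      quantumDelta r p.1 * quantumDelta r p.2 =
    quantumDelta r ma * r / (2 * Real.sin (π / r) ^ 2) := by
  have hs : 0 < Real.sin (π / r) := sin_pir_pos r hr
  have hs0 : Real.sin (π / r) ≠ 0 := ne_of_gt hs
  rw [Finset.sum_filter, Finset.sum_product]
  have hrow : ∀ b ∈ Finset.range (r - 1),
      (∑ c ∈ Finset.range (r - 1),
        if QAdmissible r ma b c then quantumDelta r b * quantumDelta r c else 0)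
      = ((-1 : ℝ) ^ ma * Real.sin (((ma : ℝ) + 1) * (π / r)) / Real.sin (π / r) ^ 3) *
          Real.sin (((b : ℝ) + 1) * (π / r)) ^ 2 := by
    intro b hb
    rw [Finset.mem_range] at hb
    have hb2 : b ≤ r - 2 := by omega
    have hIS := qInnerSum r ma b hr hma hb2
    have hterm : ∀ c : ℕ, quantumDelta r b * quantumDelta r c
        = (quantumDelta r b / Real.sin (π / r)) *
            ((-1 : ℝ) ^ c * Real.sin (((c : ℝ) + 1) * (π / r))) := by
      intro c
      unfold quantumDelta
      rw [mul_div_assoc]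
      ring
    rw [← Finset.sum_filter]
    simp only [hterm]
    rw [← Finset.mul_sum]
    have hSval : ∑ c ∈ (Finset.range (r - 1)).filter (fun c => QAdmissible r ma b c),
        (-1 : ℝ) ^ c * Real.sin (((c : ℝ) + 1) * (π / r))
        = (-1 : ℝ) ^ (ma + b) * (2 * Real.sin (((ma : ℝ) + 1) * (π / r)) *
            Real.sin (((b : ℝ) + 1) * (π / r))) / (2 * Real.sin (π / r)) := by
      rw [eq_div_iff (by positivity)]
      linarith [hIS]
    rw [hSval]
    unfold quantumDelta
    rw [mul_div_assoc, pow_add]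
    have hbb : (-1 : ℝ) ^ b * (-1 : ℝ) ^ b = 1 := by
      rw [← pow_add, ← two_mul, pow_mul]
      norm_num
    field_simp
    ring_nf
    rw [show ((-1:ℝ) ^ (b * 2)) = 1 by rw [mul_comm, pow_mul]; norm_num]
    ring
  rw [Finset.sum_congr rfl hrow, ← Finset.mul_sum]
  simp only [← mul_div_assoc]
  rw [sum_sin_sq r hr]
  unfold quantumDelta
  field_simp
  try exact Or.inl trivial
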